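/- Let B be a Segal algebra on ℝ^d that is strongly character invariant, i.e., for every s ∈ ℝ^d and f ∈ B the pointwise product χ_s·f belongs to B with ‖χ_s·f‖_B = ‖f‖_B, where χ_s(x) := e^{2πi⟨s, x⟩}. Then B is a pointwise Banach module over the Fourier algebra 𝓕L¹(ℝ^d): for every g ∈ L¹(ℝ^d) and f ∈ B, the pointwise product ǧ·f belongs to B and ‖ǧ·f‖_B ≤ ‖g‖_{L¹}·‖f‖_B, where ǧ(x) := ∫_{ℝ^d} g(s) e^{2πi⟨s, x⟩} ds. -/

import Mathlib

open MeasureTheory Real Filter Topology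

/-- The character `χ_s(t) = e^{2πi⟨s,t⟩}` of `ℝ^d`. -/
noncomputable def character {d : ℕ} (s t : Fin d → ℝ) : ℂ :=
  Complex.exp (2 * Real.pi * Complex.I * (∑ i, s i * t i))

lemma character_norm {d : ℕ} (s t : Fin d → ℝ) : ‖character s t‖ = 1 := by
  unfold character
  rw [show (2 * (Real.pi:ℂ) * Complex.I * ((∑ i, s i * t i : ℝ) : ℂ))
      = ((2 * Real.pi * (∑ i, s i * t i) : ℝ) : ℂ) * Complex.I by push_cast; ring]
  rw [Complex.norm_exp_ofReal_mul_I]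

lemma character_add_left {d : ℕ} (s s' t : Fin d → ℝ) :
    character (s + s') t = character s t * character s' t := by
  unfold character
  rw [← Complex.exp_add]
  congr 1
  have h : (∑ i, (s + s') i * t i) = (∑ i, s i * t i) + ∑ i, s' i * t i := by
    simp [Pi.add_apply, add_mul, Finset.sum_add_distrib]
  rw [h]; push_cast; ring

lemma character_add_right {d : ℕ} (s t t' : Fin d → ℝ) :
    character s (t + t') = character s t * character s t' := by
  unfold character
  rw [← Complex.exp_add]
  congr 1
  have h : (∑ i, s i * (t + t') i) = (∑ i, s i * t i) + ∑ i, s i * t' i := by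
    simp [Pi.add_apply, mul_add, Finset.sum_add_distrib]
  rw [h]; push_cast; ring

lemma character_zero_left {d : ℕ} (t : Fin d → ℝ) : character 0 t = 1 := by
  simp [character]

lemma continuous_character {d : ℕ} :
    Continuous fun p : (Fin d → ℝ) × (Fin d → ℝ) => character p.1 p.2 := by
  unfold character
  apply Complex.continuous_exp.comp
  have h : Continuous fun p : (Fin d → ℝ) × (Fin d → ℝ) => (∑ i, p.1 i * p.2 i : ℝ) :=
    continuous_finset_sum _ fun i _ =>
      ((continuous_apply i).comp continuous_fst).mul ((continuous_apply i).comp continuous_snd)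
  exact continuous_const.mul (Complex.continuous_ofReal.comp h)

lemma continuous_character_left {d : ℕ} (t : Fin d → ℝ) :
    Continuous fun s : Fin d → ℝ => character s t := by
  unfold character
  apply Complex.continuous_exp.comp
  exact continuous_const.mul (Complex.continuous_ofReal.comp
    (continuous_finset_sum _ fun i _ => (continuous_apply i).mul continuous_const))

lemma continuous_character_right {d : ℕ} (s : Fin d → ℝ) :
    Continuous fun t : Fin d → ℝ => character s t := by
  unfold character
  apply Complex.continuous_exp.comp
  exact continuous_const.mul (Complex.continuous_ofReal.comp
    (continuous_finset_sum _ fun i _ => continuous_const.mul (continuous_apply i)))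


set_option maxHeartbeats 2000000 in
/-- Let `B` be a strongly character invariant Segal algebra on `ℝ^d`
(modeled as in Statement 15, with character multiplications `M s` acting isometrically).
Then `B` is a pointwise Banach module over the Fourier algebra `𝓕L¹(ℝ^d)`: for every
`g ∈ L¹(ℝ^d)` and `f ∈ B`, the pointwise product `ǧ · f` (with
`ǧ(t) = ∫ g(s) e^{2πi⟨s,t⟩} ds`) belongs to `B` with `‖ǧ·f‖_B ≤ ‖g‖_{L¹} · ‖f‖_B`. -/
theorem segal_algebra_fourier_module
    {d : ℕ} {E : Type*}
    [NormedAddCommGroup E] [NormedSpace ℂ E] [CompleteSpace E]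
    (j : E →ₗ[ℂ] ((Fin d → ℝ) → ℂ))
    (hint : ∀ x : E, Integrable (j x) volume)
    (hinj : ∀ x y : E, j x =ᵐ[volume] j y → x = y)
    (hemb : ∃ C : ℝ, 0 < C ∧ ∀ x : E, ∫ t, ‖j x t‖ ≤ C * ‖x‖)
    (hdense : ∀ g : (Fin d → ℝ) → ℂ, Integrable g volume →
      ∀ ε : ℝ, 0 < ε → ∃ x : E, ∫ t, ‖j x t - g t‖ < ε)
    (T : (Fin d → ℝ) → E →ₗ[ℂ] E)
    (hT : ∀ (a : Fin d → ℝ) (x : E), j (T a x) =ᵐ[volume] fun t => j x (t - a))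
    (hTiso : ∀ (a : Fin d → ℝ) (x : E), ‖T a x‖ = ‖x‖)
    (hTcont : ∀ x : E, Continuous fun a => T a x)
    (M : (Fin d → ℝ) → E →ₗ[ℂ] E)
    (hM : ∀ (s : Fin d → ℝ) (x : E), j (M s x) =ᵐ[volume] fun t => character s t * j x t)
    (hMiso : ∀ (s : Fin d → ℝ) (x : E), ‖M s x‖ = ‖x‖) :
    ∀ g : (Fin d → ℝ) → ℂ, Integrable g volume →
      ∀ x : E, ∃ y : E,
        (j y =ᵐ[volume] fun t => (∫ s, g s * character s t) * j x t) ∧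
        ‖y‖ ≤ (∫ s, ‖g s‖) * ‖x‖ := by
  intro g hg x
  obtain ⟨C, hC0, hC⟩ := hemb
  -- the test functionals
  obtain ⟨lam, hlam⟩ : ∃ lam : Set (Fin d → ℝ) → (E →L[ℂ] ℂ),
      ∀ A (z : E), lam A z = ∫ t in A, j z t := by
    refine ⟨fun A => LinearMap.mkContinuous
      { toFun := fun z => ∫ t in A, j z t
        map_add' := fun z w => by
          have hj : j (z + w) = j z + j w := map_add j z w
          simp only [hj, Pi.add_apply]
          exact integral_add (hint z).integrableOn (hint w).integrableOn
        map_smul' := fun c z => by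
          have hj : j (c • z) = c • j z := j.map_smul c z
          simp only [hj, Pi.smul_apply, RingHom.id_apply, smul_eq_mul]
          exact integral_const_mul c _ }
      C (fun z => ?_), fun A z => rfl⟩
    calc ‖∫ t in A, j z t‖ ≤ ∫ t in A, ‖j z t‖ := norm_integral_le_integral_norm _
    _ ≤ ∫ t, ‖j z t‖ :=
        setIntegral_le_integral (hint z).norm (Eventually.of_forall fun t => norm_nonneg _)
    _ ≤ C * ‖z‖ := hC z
  -- equality from equal test integrals
  have heq : ∀ z w : E, (∀ A : Set (Fin d → ℝ), MeasurableSet A → volume A < ⊤ →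
      lam A z = lam A w) → z = w := by
    intro z w h
    refine hinj z w (Integrable.ae_eq_of_forall_setIntegral_eq _ _ (hint z) (hint w) ?_)
    intro A hA hAfin
    have := h A hA hAfin
    rwa [hlam, hlam] at this
  -- translation of a.e. equalities
  have htrans : ∀ (f h : (Fin d → ℝ) → ℂ) (a : Fin d → ℝ), f =ᵐ[volume] h →
      (fun t => f (t - a)) =ᵐ[volume] fun t => h (t - a) := fun f h a hfh =>
    (measurePreserving_sub_right volume a).quasiMeasurePreserving.ae_eq_comp hfh
  -- T 0 x = x
  have hT0 : T 0 x = x := by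
    apply hinj
    refine (hT 0 x).trans (Eventually.of_forall fun t => ?_)
    simp
  -- group law for M
  have hMadd : ∀ (s s' : Fin d → ℝ) (z : E), M s (M s' z) = M (s + s') z := by
    intro s s' z
    apply hinj
    refine (hM s (M s' z)).trans (EventuallyEq.trans ?_ (hM (s + s') z).symm)
    filter_upwards [hM s' z] with t ht
    rw [ht, ← mul_assoc, ← character_add_left]
  -- commutation of T and M
  have hTM : ∀ (a s : Fin d → ℝ) (z : E), T a (M s z) = character s (-a) • M s (T a z) := by
    intro a s z
    apply hinj
    have h1 := hT a (M s z)
    have h2 := htrans _ _ a (hM s z)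
    refine (h1.trans h2).trans ?_
    have h5 : j (character s (-a) • M s (T a z))
        = fun t => character s (-a) * j (M s (T a z)) t := by
      have hj : j (character s (-a) • M s (T a z)) = character s (-a) • j (M s (T a z)) :=
        j.map_smul _ _
      funext t; rw [hj]; simp [Pi.smul_apply, smul_eq_mul]
    rw [h5]
    filter_upwards [hM s (T a z), hT a z] with t ht3 ht4
    have hta : character s (t - a) = character s (-a) * character s t := by
      rw [sub_eq_add_neg, character_add_right, mul_comm]
    rw [ht3, ht4, hta, mul_assoc]
  -- integrability of convolution-type integrands
  have hKint : ∀ v : (Fin d → ℝ) → ℂ, Integrable v volume → ∀ z : E,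
      Integrable (fun a => v a • T a z) volume := by
    intro v hv z
    refine (hv.norm.mul_const ‖z‖).mono'
      (hv.aestronglyMeasurable.smul (hTcont z).aestronglyMeasurable)
      (Eventually.of_forall fun a => ?_)
    rw [norm_smul, hTiso]
  have hKnorm : ∀ (v : (Fin d → ℝ) → ℂ), Integrable v volume → ∀ z : E,
      ‖∫ a, v a • T a z‖ ≤ (∫ a, ‖v a‖) * ‖z‖ := by
    intro v hv z
    calc ‖∫ a, v a • T a z‖ ≤ ∫ a, ‖v a • T a z‖ := norm_integral_le_integral_norm _
    _ = ∫ a, ‖v a‖ * ‖z‖ := by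
        refine integral_congr_ae (Eventually.of_forall fun a => ?_)
        simp only [norm_smul, hTiso]
    _ = (∫ a, ‖v a‖) * ‖z‖ := integral_mul_const _ _
  -- product integrability
  have hconv_int : ∀ v : (Fin d → ℝ) → ℂ, Integrable v volume →
      ∀ w : (Fin d → ℝ) → ℂ, Integrable w volume → ∀ A : Set (Fin d → ℝ),
      Integrable (fun p : (Fin d → ℝ) × (Fin d → ℝ) => v p.1 * w (p.2 - p.1))
        (volume.prod (volume.restrict A)) := by
    intro v hv w hw A
    have h1 : Integrable (fun p : (Fin d → ℝ) × (Fin d → ℝ) => v p.2 * w (p.1 - p.2))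
        ((volume : Measure (Fin d → ℝ)).prod volume) :=
      hv.convolution_integrand (ContinuousLinearMap.mul ℂ ℂ) hw
    have h2 := h1.swap
    have h3 : (volume : Measure (Fin d → ℝ)).prod (volume.restrict A)
        = ((volume : Measure (Fin d → ℝ)).prod volume).restrict (Set.univ ×ˢ A) := by
      rw [← Measure.prod_restrict, Measure.restrict_univ]
    rw [h3]
    exact h2.restrict
  -- main computation of lam on K-integrals
  have hlamK : ∀ (v : (Fin d → ℝ) → ℂ) (hv : Integrable v volume) (z : E)
      (A : Set (Fin d → ℝ)) (hA : MeasurableSet A),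
      lam A (∫ a, v a • T a z) = ∫ t in A, ∫ a, v a * j z (t - a) := by
    intro v hv z A hA
    rw [← ContinuousLinearMap.integral_comp_comm _ (hKint v hv z)]
    have h1 : ∀ a, lam A (v a • T a z) = ∫ t in A, v a * j z (t - a) := by
      intro a
      rw [ContinuousLinearMap.map_smul, smul_eq_mul, hlam]
      rw [setIntegral_congr_ae hA ((hT a z).mono fun t ht _ => ht)]
      rw [integral_const_mul]
    simp only [h1]
    exact integral_integral_swap (hconv_int v hv (j z) (hint z) A)
  -- commutativity of the convolution action
  have hKcomm : ∀ e w : E, (∫ a, j e a • T a w) = ∫ a, j w a • T a e := by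
    intro e w
    apply heq
    intro A hA hAfin
    rw [hlamK _ (hint e) w A hA, hlamK _ (hint w) e A hA]
    refine integral_congr_ae (Eventually.of_forall fun t => ?_)
    calc (∫ a, j e a * j w (t - a))
        = ∫ a, j e (t - a) * j w (t - (t - a)) :=
          (integral_sub_left_eq_self (fun a => j e a * j w (t - a)) volume t).symm
    _ = ∫ a, j w a * j e (t - a) := by
        refine integral_congr_ae (Eventually.of_forall fun a => ?_)
        simp only [sub_sub_cancel]
        ring
  -- L¹ norm of j (M s x - x)
  have hF2eq : ∀ s : Fin d → ℝ,
      (∫ a, ‖j (M s x - x) a‖) = ∫ t, ‖character s t - 1‖ * ‖j x t‖ := by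
    intro s
    refine integral_congr_ae ?_
    filter_upwards [hM s x] with t ht
    have hj : j (M s x - x) = j (M s x) - j x := map_sub j _ _
    rw [hj]
    simp only [Pi.sub_apply]
    rw [ht, ← sub_one_mul, norm_mul]
  -- tendsto fact 2
  have hchar_cont_s : ∀ t : Fin d → ℝ, Tendsto (fun s : Fin d → ℝ => character s t) (𝓝 0) (𝓝 1) := by
    intro t
    have := (continuous_character_left t).tendsto 0
    rwa [character_zero_left] at this
  have hF2tend : Tendsto (fun s => ∫ t, ‖character s t - 1‖ * ‖j x t‖) (𝓝 0) (𝓝 0) := by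
    have hmeas : ∀ s : Fin d → ℝ,
        AEStronglyMeasurable (fun t => ‖character s t - 1‖ * ‖j x t‖) volume := fun s =>
      ((((continuous_character_right s).sub
        continuous_const).norm.aestronglyMeasurable).mul (hint x).1.norm)
    have hbdd : ∀ s : Fin d → ℝ, ∀ᵐ t ∂(volume : Measure (Fin d → ℝ)),
        ‖‖character s t - 1‖ * ‖j x t‖‖ ≤ 2 * ‖j x t‖ := by
      intro s
      refine Eventually.of_forall fun t => ?_
      rw [Real.norm_of_nonneg (mul_nonneg (norm_nonneg _) (norm_nonneg _))]
      refine mul_le_mul_of_nonneg_right ?_ (norm_nonneg _)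
      refine (norm_sub_le _ _).trans ?_
      rw [character_norm]; norm_num
    have hlim : ∀ᵐ t ∂(volume : Measure (Fin d → ℝ)),
        Tendsto (fun s : Fin d → ℝ => ‖character s t - 1‖ * ‖j x t‖) (𝓝 0) (𝓝 0) := by
      refine Eventually.of_forall fun t => ?_
      have h1 : Tendsto (fun s : Fin d → ℝ => ‖character s t - 1‖ * ‖j x t‖) (𝓝 0)
          (𝓝 (‖(1 : ℂ) - 1‖ * ‖j x t‖)) :=
        (((hchar_cont_s t).sub tendsto_const_nhds).norm).mul_const _
      simpa using h1
    have h := tendsto_integral_filter_of_dominated_convergence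
      (F := fun (s : Fin d → ℝ) t => ‖character s t - 1‖ * ‖j x t‖) (f := fun _ => (0 : ℝ))
      (fun t => 2 * ‖j x t‖) (Eventually.of_forall hmeas) (Eventually.of_forall hbdd)
      ((hint x).norm.const_mul 2) hlim
    simpa using h
  -- continuity of s ↦ M s x at 0
  have hM0 : Tendsto (fun s => M s x) (𝓝 0) (𝓝 x) := by
    rw [Metric.tendsto_nhds]
    intro ε₀ hε₀
    have hxn : (0:ℝ) ≤ ‖x‖ := norm_nonneg x
    set ε : ℝ := ε₀ / (4 + 3 * ‖x‖) with hεdef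
    have hε : 0 < ε := by positivity
    -- a small ball on which translation moves x little
    obtain ⟨r, hr0, hball⟩ : ∃ r : ℝ, 0 < r ∧ ∀ a : Fin d → ℝ, ‖a‖ ≤ r → ‖T a x - x‖ ≤ ε := by
      have hc : ContinuousAt (fun a : Fin d → ℝ => T a x) 0 := (hTcont x).continuousAt
      rw [Metric.continuousAt_iff] at hc
      obtain ⟨δ, hδ0, hδ⟩ := hc ε hε
      refine ⟨δ / 2, by positivity, fun a ha => ?_⟩
      have h1 : dist a 0 < δ := by rw [dist_zero_right]; linarith
      have h2 := hδ h1
      simp only [hT0] at h2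
      rw [dist_eq_norm] at h2
      exact h2.le
    set B : Set (Fin d → ℝ) := Metric.closedBall 0 r with hBdef
    have hBmeas : MeasurableSet B := measurableSet_closedBall
    have hBlt : volume B < ⊤ := measure_closedBall_lt_top
    have hcpos : 0 < (volume B).toReal :=
      ENNReal.toReal_pos (Metric.measure_closedBall_pos volume 0 hr0).ne' hBlt.ne
    set c : ℝ := (volume B).toReal with hcdef
    set u : (Fin d → ℝ) → ℂ := B.indicator (fun _ => ((c⁻¹ : ℝ) : ℂ)) with hudef
    have hu_int : Integrable u volume := by
      rw [hudef, integrable_indicator_iff hBmeas]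
      exact integrableOn_const hBlt.ne
    have hu_norm : ∀ a, ‖u a‖ = B.indicator (fun _ => c⁻¹) a := by
      intro a
      rw [hudef]
      by_cases h : a ∈ B
      · rw [Set.indicator_of_mem h, Set.indicator_of_mem h, Complex.norm_real,
          Real.norm_eq_abs, abs_of_nonneg (inv_nonneg.2 hcpos.le)]
      · rw [Set.indicator_of_notMem h, Set.indicator_of_notMem h, norm_zero]
    have hu_sum : (∫ a, u a) = 1 := by
      rw [hudef, integral_indicator_const _ hBmeas, measureReal_def, ← hcdef, Complex.real_smul,
        ← Complex.ofReal_mul, mul_inv_cancel₀ hcpos.ne', Complex.ofReal_one]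
    have havg : ∀ ψ : (Fin d → ℝ) → ℝ, Continuous ψ → (∀ a, 0 ≤ ψ a) →
        (∀ a ∈ B, ψ a ≤ ε) → (∫ a, ‖u a‖ * ψ a) ≤ ε := by
      intro ψ hψc hψ0 hψle
      have h1 : (fun a => ‖u a‖ * ψ a) = B.indicator (fun a => c⁻¹ * ψ a) := by
        funext a
        rw [hu_norm]
        by_cases h : a ∈ B
        · rw [Set.indicator_of_mem h, Set.indicator_of_mem h]
        · rw [Set.indicator_of_notMem h, Set.indicator_of_notMem h, zero_mul]
      rw [h1, integral_indicator hBmeas]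
      have h2 : (∫ a in B, c⁻¹ * ψ a) ≤ ∫ a in B, c⁻¹ * ε := by
        refine setIntegral_mono_on ?_ ?_ hBmeas ?_
        · exact (continuous_const.mul hψc).continuousOn.integrableOn_compact
            (isCompact_closedBall 0 r)
        · exact integrableOn_const hBlt.ne
        · intro a ha
          exact mul_le_mul_of_nonneg_left (hψle a ha) (inv_nonneg.2 hcpos.le)
      refine h2.trans ?_
      rw [setIntegral_const, smul_eq_mul, measureReal_def, ← hcdef,
        show c * (c⁻¹ * ε) = (c * c⁻¹) * ε by ring, mul_inv_cancel₀ hcpos.ne', one_mul]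
    obtain ⟨e, he⟩ := hdense u hu_int ε hε
    -- Fact 1: modulation factor integral tends to zero
    have hbd1 : ∀ (s : Fin d → ℝ) (a : Fin d → ℝ),
        ‖‖u a‖ * ‖character s (-a) - 1‖‖ ≤ ‖u a‖ * 2 := by
      intro s a
      rw [Real.norm_of_nonneg (mul_nonneg (norm_nonneg _) (norm_nonneg _))]
      refine mul_le_mul_of_nonneg_left ?_ (norm_nonneg _)
      refine (norm_sub_le _ _).trans ?_
      rw [character_norm]; norm_num
    have hF1int : ∀ s : Fin d → ℝ,
        Integrable (fun a => ‖u a‖ * ‖character s (-a) - 1‖) volume := by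
      intro s
      refine (hu_int.norm.mul_const 2).mono' ?_ (Eventually.of_forall fun a => hbd1 s a)
      exact hu_int.norm.aestronglyMeasurable.mul
        (((continuous_character_right s).comp continuous_neg).sub
          continuous_const).norm.aestronglyMeasurable
    have hF1tend : Tendsto (fun s => ∫ a, ‖u a‖ * ‖character s (-a) - 1‖) (𝓝 0) (𝓝 0) := by
      have hlim : ∀ᵐ a ∂(volume : Measure (Fin d → ℝ)),
          Tendsto (fun s : Fin d → ℝ => ‖u a‖ * ‖character s (-a) - 1‖) (𝓝 0) (𝓝 0) := by
        refine Eventually.of_forall fun a => ?_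
        have h1 : Tendsto (fun s : Fin d → ℝ => ‖u a‖ * ‖character s (-a) - 1‖) (𝓝 0)
            (𝓝 (‖u a‖ * ‖(1:ℂ) - 1‖)) :=
          (((hchar_cont_s (-a)).sub tendsto_const_nhds).norm).const_mul _
        simpa using h1
      have h := tendsto_integral_filter_of_dominated_convergence
        (F := fun (s : Fin d → ℝ) a => ‖u a‖ * ‖character s (-a) - 1‖) (f := fun _ => (0:ℝ))
        (fun a => ‖u a‖ * 2)
        (Eventually.of_forall fun s => (hF1int s).1)
        (Eventually.of_forall fun s => Eventually.of_forall fun a => hbd1 s a)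
        (hu_int.norm.mul_const 2) hlim
      simpa using h
    have hev1 : ∀ᶠ s : Fin d → ℝ in 𝓝 0, (∫ a, ‖u a‖ * ‖character s (-a) - 1‖) < ε :=
      hF1tend.eventually (gt_mem_nhds hε)
    have heps2 : 0 < ε / (1 + ‖e‖) := by positivity
    have hev2 : ∀ᶠ s : Fin d → ℝ in 𝓝 0,
        (∫ t, ‖character s t - 1‖ * ‖j x t‖) < ε / (1 + ‖e‖) :=
      hF2tend.eventually (gt_mem_nhds heps2)
    filter_upwards [hev1, hev2] with s hs1 hs2
    rw [dist_eq_norm]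
    have hw2 : ‖M s x - x‖ ≤ 2 * ‖x‖ := by
      refine (norm_sub_le _ _).trans ?_
      rw [hMiso]; linarith
    have hint1 : Integrable (fun a => u a • T a (M s x)) volume := hKint u hu_int _
    have hint2 : Integrable (fun a => u a • T a x) volume := hKint u hu_int _
    -- decomposition
    have hsplit : (∫ a, u a • T a (M s x - x))
        = (∫ a, u a • T a (M s x)) - ∫ a, u a • T a x := by
      rw [← integral_sub hint1 hint2]
      refine integral_congr_ae (Eventually.of_forall fun a => ?_)
      simp only [(T a).map_sub, smul_sub]
    have hdecomp : M s x - x =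
        ((∫ a, u a • T a x) - x) + (∫ a, u a • T a (M s x - x))
          + (M s x - ∫ a, u a • T a (M s x)) := by
      rw [hsplit]; abel
    -- term 3
    have hterm3 : ‖(∫ a, u a • T a x) - x‖ ≤ ε := by
      have h1 : (∫ a, u a • T a x) - x = ∫ a, u a • (T a x - x) := by
        have h2 : (∫ a, u a • (T a x - x)) = (∫ a, u a • T a x) - ∫ a, u a • x := by
          rw [← integral_sub hint2 (hu_int.smul_const x)]
          refine integral_congr_ae (Eventually.of_forall fun a => ?_)
          simp only [smul_sub]
        rw [h2, integral_smul_const, hu_sum, one_smul]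
      rw [h1]
      refine (norm_integral_le_integral_norm _).trans ?_
      have h3 : (∫ a, ‖u a • (T a x - x)‖) = ∫ a, ‖u a‖ * ‖T a x - x‖ :=
        integral_congr_ae (Eventually.of_forall fun a => by simp only [norm_smul])
      rw [h3]
      refine havg _ (((hTcont x).sub continuous_const).norm) (fun a => norm_nonneg _) ?_
      intro a ha
      refine hball a ?_
      rw [hBdef] at ha
      rwa [Metric.mem_closedBall, dist_zero_right] at ha
    -- pointwise bound for modulated translations
    have hpt : ∀ a : Fin d → ℝ,
        ‖T a (M s x) - M s x‖ ≤ ‖character s (-a) - 1‖ * ‖x‖ + ‖T a x - x‖ := by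
      intro a
      have h2 : T a (M s x) - M s x
          = (character s (-a) - 1) • M s (T a x) + (M s (T a x) - M s x) := by
        rw [hTM a s x, sub_smul, one_smul]; abel
      rw [h2]
      refine (norm_add_le _ _).trans ?_
      rw [norm_smul, hMiso, hTiso, ← (M s).map_sub, hMiso]
    -- term 1
    have huT : Integrable (fun a => ‖u a‖ * ‖T a x - x‖) volume := by
      refine (hu_int.norm.mul_const (2 * ‖x‖)).mono' ?_ (Eventually.of_forall fun a => ?_)
      · exact hu_int.norm.aestronglyMeasurable.mul
          ((hTcont x).sub continuous_const).norm.aestronglyMeasurable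
      · rw [Real.norm_of_nonneg (mul_nonneg (norm_nonneg _) (norm_nonneg _))]
        refine mul_le_mul_of_nonneg_left ?_ (norm_nonneg _)
        refine (norm_sub_le _ _).trans ?_
        rw [hTiso]; linarith
    have hterm1 : ‖M s x - ∫ a, u a • T a (M s x)‖ ≤ ε * ‖x‖ + ε := by
      have h1 : M s x - (∫ a, u a • T a (M s x))
          = - ∫ a, u a • (T a (M s x) - M s x) := by
        have h2 : (∫ a, u a • (T a (M s x) - M s x))
            = (∫ a, u a • T a (M s x)) - ∫ a, u a • M s x := by
          rw [← integral_sub hint1 (hu_int.smul_const (M s x))]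
          refine integral_congr_ae (Eventually.of_forall fun a => ?_)
          simp only [smul_sub]
        rw [h2, integral_smul_const, hu_sum, one_smul, neg_sub]
      rw [h1, norm_neg]
      refine (norm_integral_le_integral_norm _).trans ?_
      have hLint : Integrable (fun a => u a • (T a (M s x) - M s x)) volume := by
        have h4 := hint1.sub (hu_int.smul_const (M s x))
        refine h4.congr (Eventually.of_forall fun a => ?_)
        simp only [Pi.sub_apply, smul_sub]
      have hRint : Integrable
          (fun a => (‖u a‖ * ‖character s (-a) - 1‖) * ‖x‖ + ‖u a‖ * ‖T a x - x‖) volume :=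
        ((hF1int s).mul_const ‖x‖).add huT
      have hmono : (∫ a, ‖u a • (T a (M s x) - M s x)‖)
          ≤ ∫ a, ((‖u a‖ * ‖character s (-a) - 1‖) * ‖x‖ + ‖u a‖ * ‖T a x - x‖) := by
        refine integral_mono hLint.norm hRint ?_
        intro a
        simp only [norm_smul]
        calc ‖u a‖ * ‖T a (M s x) - M s x‖
            ≤ ‖u a‖ * (‖character s (-a) - 1‖ * ‖x‖ + ‖T a x - x‖) :=
              mul_le_mul_of_nonneg_left (hpt a) (norm_nonneg _)
        _ = (‖u a‖ * ‖character s (-a) - 1‖) * ‖x‖ + ‖u a‖ * ‖T a x - x‖ := by ring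
      refine hmono.trans ?_
      rw [integral_add ((hF1int s).mul_const ‖x‖) huT, integral_mul_const]
      have hb1 : (∫ a, ‖u a‖ * ‖character s (-a) - 1‖) * ‖x‖ ≤ ε * ‖x‖ :=
        mul_le_mul_of_nonneg_right hs1.le hxn
      have hb2 : (∫ a, ‖u a‖ * ‖T a x - x‖) ≤ ε := by
        refine havg _ (((hTcont x).sub continuous_const).norm) (fun a => norm_nonneg _) ?_
        intro a ha
        refine hball a ?_
        rw [hBdef] at ha
        rwa [Metric.mem_closedBall, dist_zero_right] at ha
      linarith
    -- term 2
    have hterm2 : ‖∫ a, u a • T a (M s x - x)‖ ≤ ε * (2 * ‖x‖) + ε := by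
      have hue : Integrable (fun a => u a - j e a) volume := hu_int.sub (hint e)
      have hsplit2 : (∫ a, u a • T a (M s x - x))
          = (∫ a, (u a - j e a) • T a (M s x - x)) + ∫ a, j e a • T a (M s x - x) := by
        rw [← integral_add (hKint _ hue (M s x - x)) (hKint _ (hint e) (M s x - x))]
        refine integral_congr_ae (Eventually.of_forall fun a => ?_)
        simp only
        rw [← add_smul, sub_add_cancel]
      rw [hsplit2]
      refine (norm_add_le _ _).trans (add_le_add ?_ ?_)
      · refine (hKnorm _ hue (M s x - x)).trans ?_
        have h1 : (∫ a, ‖u a - j e a‖) ≤ ε := by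
          have h2 : (∫ a, ‖u a - j e a‖) = ∫ a, ‖j e a - u a‖ :=
            integral_congr_ae (Eventually.of_forall fun a => norm_sub_rev _ _)
          rw [h2]; exact he.le
        exact mul_le_mul h1 hw2 (norm_nonneg _) hε.le
      · rw [hKcomm e (M s x - x)]
        refine (hKnorm _ (hint (M s x - x)) e).trans ?_
        rw [hF2eq s]
        calc (∫ t, ‖character s t - 1‖ * ‖j x t‖) * ‖e‖
            ≤ (ε / (1 + ‖e‖)) * (1 + ‖e‖) :=
              mul_le_mul hs2.le (by linarith [norm_nonneg e]) (norm_nonneg e) heps2.le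
        _ = ε := by field_simp
    -- combine
    calc ‖M s x - x‖
        = ‖((∫ a, u a • T a x) - x) + (∫ a, u a • T a (M s x - x))
            + (M s x - ∫ a, u a • T a (M s x))‖ := by rw [← hdecomp]
    _ ≤ ‖(∫ a, u a • T a x) - x‖ + ‖∫ a, u a • T a (M s x - x)‖
          + ‖M s x - ∫ a, u a • T a (M s x)‖ := norm_add₃_le
    _ ≤ ε + (ε * (2 * ‖x‖) + ε) + (ε * ‖x‖ + ε) := by
        exact add_le_add (add_le_add hterm3 hterm2) hterm1
    _ < ε₀ := by
        have h9 : ε * (4 + 3 * ‖x‖) = ε₀ := by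
          rw [hεdef]; field_simp
        nlinarith [hε, hxn]
  -- continuity everywhere
  have hMcont : Continuous fun s => M s x := by
    rw [continuous_iff_continuousAt]
    intro s₀
    have h1 : ∀ s : Fin d → ℝ, M s x - M s₀ x = M s₀ (M (s - s₀) x - x) := by
      intro s
      have hs : s₀ + (s - s₀) = s := by abel
      rw [(M s₀).map_sub, hMadd s₀ (s - s₀) x, hs]
    have h2 : Tendsto (fun s : Fin d → ℝ => s - s₀) (𝓝 s₀) (𝓝 0) := by
      have := (continuous_id.sub (continuous_const : Continuous fun _ : Fin d → ℝ => s₀)).tendsto s₀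
      convert this using 2 <;> simp
    have h3 : Tendsto (fun v : Fin d → ℝ => ‖M v x - x‖) (𝓝 0) (𝓝 0) := by
      have h4 := hM0
      rw [tendsto_iff_norm_sub_tendsto_zero] at h4
      exact h4
    unfold ContinuousAt
    rw [tendsto_iff_norm_sub_tendsto_zero]
    have h5 : (fun s => ‖M s x - M s₀ x‖) = fun s => ‖M (s - s₀) x - x‖ := by
      funext s; rw [h1, hMiso]
    rw [h5]
    exact h3.comp h2
  -- the element y
  have hyMeas : AEStronglyMeasurable (fun s => g s • M s x) volume :=
    hg.aestronglyMeasurable.smul hMcont.aestronglyMeasurable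
  have hyint : Integrable (fun s => g s • M s x) volume := by
    refine (hg.norm.mul_const ‖x‖).mono' hyMeas (Eventually.of_forall fun s => ?_)
    rw [norm_smul, hMiso]
  refine ⟨∫ s, g s • M s x, ?_, ?_⟩
  · -- the a.e. identity
    have hGcont : Continuous fun t => ∫ s, g s * character s t := by
      refine continuous_of_dominated (bound := fun s => ‖g s‖) ?_ ?_ hg.norm ?_
      · intro t
        exact hg.1.mul (continuous_character_left t).aestronglyMeasurable
      · intro t
        refine Eventually.of_forall fun s => ?_
        rw [norm_mul, character_norm, mul_one]
      · exact Eventually.of_forall fun s => continuous_const.mul (continuous_character_right s)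
    have hRHSint : Integrable (fun t => (∫ s, g s * character s t) * j x t) volume := by
      refine ((hint x).norm.const_mul (∫ s, ‖g s‖)).mono'
        (hGcont.aestronglyMeasurable.mul (hint x).1) (Eventually.of_forall fun t => ?_)
      rw [norm_mul]
      refine mul_le_mul_of_nonneg_right ?_ (norm_nonneg _)
      refine (norm_integral_le_integral_norm _).trans (le_of_eq ?_)
      refine integral_congr_ae (Eventually.of_forall fun s => ?_)
      simp only [norm_mul, character_norm, mul_one]
    refine Integrable.ae_eq_of_forall_setIntegral_eq _ _ (hint _) hRHSint ?_
    intro A hA hAfin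
    have hL : (∫ t in A, j (∫ s, g s • M s x) t)
        = ∫ s, g s * ∫ t in A, character s t * j x t := by
      rw [← hlam]
      rw [← ContinuousLinearMap.integral_comp_comm _ hyint]
      refine integral_congr_ae (Eventually.of_forall fun s => ?_)
      simp only
      rw [ContinuousLinearMap.map_smul, smul_eq_mul, hlam]
      congr 1
      exact setIntegral_congr_ae hA ((hM s x).mono fun t ht _ => ht)
    rw [hL]
    have hprod : Integrable
        (fun p : (Fin d → ℝ) × (Fin d → ℝ) => g p.1 * (character p.1 p.2 * j x p.2))
        (volume.prod (volume.restrict A)) := by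
      have hmeasp : AEStronglyMeasurable
          (fun p : (Fin d → ℝ) × (Fin d → ℝ) => g p.1 * (character p.1 p.2 * j x p.2))
          (volume.prod (volume.restrict A)) := by
        refine AEStronglyMeasurable.mul ?_ (AEStronglyMeasurable.mul ?_ ?_)
        · exact hg.1.comp_quasiMeasurePreserving Measure.quasiMeasurePreserving_fst
        · exact continuous_character.aestronglyMeasurable
        · exact ((hint x).1.restrict).comp_quasiMeasurePreserving Measure.quasiMeasurePreserving_snd
      have hbnd : Integrable (fun p : (Fin d → ℝ) × (Fin d → ℝ) => ‖g p.1‖ * ‖j x p.2‖)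
          (volume.prod (volume.restrict A)) :=
        hg.norm.mul_prod ((hint x).norm.restrict)
      refine hbnd.mono' hmeasp (Eventually.of_forall fun p => ?_)
      rw [norm_mul, norm_mul, character_norm, one_mul]
    have hswap := integral_integral_swap
      (f := fun (s : Fin d → ℝ) (t : Fin d → ℝ) => g s * (character s t * j x t)) hprod
    calc (∫ s, g s * ∫ t in A, character s t * j x t)
        = ∫ s, ∫ t in A, g s * (character s t * j x t) := by
          refine integral_congr_ae (Eventually.of_forall fun s => ?_)
          simp only
          rw [integral_const_mul]
      _ = ∫ t in A, ∫ s, g s * (character s t * j x t) := hswap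
      _ = ∫ t in A, (∫ s, g s * character s t) * j x t := by
          refine integral_congr_ae (Eventually.of_forall fun t => ?_)
          simp only
          have h6 : ∀ s : Fin d → ℝ, g s * (character s t * j x t)
              = (g s * character s t) • (j x t) := by
            intro s; rw [smul_eq_mul]; ring
          simp_rw [h6]
          rw [integral_smul_const, smul_eq_mul]
  · calc ‖∫ s, g s • M s x‖ ≤ ∫ s, ‖g s • M s x‖ := norm_integral_le_integral_norm _
    _ = ∫ s, ‖g s‖ * ‖x‖ := by
        refine integral_congr_ae (Eventually.of_forall fun s => ?_)
        simp only [norm_smul, hMiso]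
    _ = (∫ s, ‖g s‖) * ‖x‖ := integral_mul_const _ _
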